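/- Condensation unitary exists: for any finite orthonormal family ξ₁, …, ξ_k of quantum strings spanning a prefix free Hilbert space, each supported on strings of length ≤ l_max, and any n ≥ 1, the map sending the zero-extended forms |ξ_{i₁}^{zef}⟩ ⊗ ⋯ ⊗ |ξ_{iₙ}^{zef}⟩ to the zero-extended form of the concatenation (|ξ_{i₁}⟩ ⋯ |ξ_{iₙ}⟩)^{zef} is well-defined on an orthonormal set and extends to a unitary on (ℂ²)^{⊗ n·l_max}; i.e., prefix free Hilbert spaces are condensable. -/

import Mathlib

open scoped Classical BigOperators

noncomputable section

/-- Quantum strings: finitely-supported amplitude functions on finite binary strings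
(the Fock space ⊕ₙ (ℂ²)^{⊗n}). -/
abbrev QStr := (List Bool) →₀ ℂ

/-- Inner product ⟨φ|ψ⟩ = Σ conj(φ x) ψ x. -/
noncomputable def inn (φ ψ : QStr) : ℂ :=
  ∑ x ∈ φ.support ∪ ψ.support, (starRingEnd ℂ) (φ x) * ψ x

/-- Concatenation |φχ⟩, extended bilinearly from basis strings. -/
noncomputable def qconcat (φ χ : QStr) : QStr :=
  φ.sum fun x a => χ.sum fun y b => Finsupp.single (x ++ y) (a * b)

/-- |φ⟩ is a (quantum) prefix of |ψ⟩. -/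
def QIsPrefix (φ ψ : QStr) : Prop :=
  ∃ χ : QStr, χ [] = 0 ∧ inn (qconcat φ χ) ψ ≠ 0

/-- Base length: maximal classical length in the support. -/
noncomputable def baseLen (ψ : QStr) : ℕ := ψ.support.sup List.length

/-- Average length. -/
noncomputable def avgLen (ψ : QStr) : ℝ := ∑ x ∈ ψ.support, ‖ψ x‖ ^ 2 * (x.length : ℝ)


/-- Zero padding of a classical string to m (qu)bits. -/
def pad (m : ℕ) (x : List Bool) : Fin m → Bool := fun i => x.getD i false

/-- Zero-extended form of a quantum string supported on lengths ≤ m, as a vector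
of (ℂ²)^{⊗ m} ≅ ℓ²({0,1}^m). -/
noncomputable def zef (m : ℕ) (ψ : QStr) : EuclideanSpace ℂ (Fin m → Bool) :=
  (WithLp.equiv 2 ((Fin m → Bool) → ℂ)).symm
    (fun s => ∑ x ∈ ψ.support, if pad m x = s then ψ x else 0)

/-- Concatenation of a list of quantum strings. -/
noncomputable def concatList : List QStr → QStr
  | [] => Finsupp.single [] 1
  | φ :: rest => qconcat φ (concatList rest)

/-- Index of the i-th bit of the j-th block. -/
def embedIdx (n lmax : ℕ) (j : Fin n) (i : Fin lmax) : Fin (n * lmax) :=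
  ⟨j.1 * lmax + i.1, by
    have h1 : j.1 * lmax + i.1 < (j.1 + 1) * lmax := by
      have hi := i.2; rw [add_mul, one_mul]; omega
    exact lt_of_lt_of_le h1 (Nat.mul_le_mul_right lmax j.2)⟩

/-- Tensor product |ξ₁^{zef}⟩ ⊗ ⋯ ⊗ |ξₙ^{zef}⟩ in (ℂ²)^{⊗ n·lmax}. -/
noncomputable def tensorZef (n lmax : ℕ) (f : Fin n → QStr) :
    EuclideanSpace ℂ (Fin (n * lmax) → Bool) :=
  (WithLp.equiv 2 ((Fin (n * lmax) → Bool) → ℂ)).symm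
    (fun s => ∏ j : Fin n, zef lmax (f j) (fun i => s (embedIdx n lmax j i)))

namespace Stmt19Aux

noncomputable def S2 (φ ψ : QStr) (w : List Bool) : ℂ :=
  ∑ x ∈ φ.support, (starRingEnd ℂ) (φ x) * ψ (x ++ w)

lemma sum_eq_S2 (φ ψ : QStr) (w : List Bool) {s : Finset (List Bool)} (h : φ.support ⊆ s) :
    ∑ x ∈ s, (starRingEnd ℂ) (φ x) * ψ (x ++ w) = S2 φ ψ w := by
  rw [S2]
  refine (Finset.sum_subset h ?_).symm
  intro x _ hx
  simp [Finsupp.notMem_support_iff.mp hx]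

lemma inn_eq_sum_left (φ ψ : QStr) :
    inn φ ψ = ∑ x ∈ φ.support, (starRingEnd ℂ) (φ x) * ψ x := by
  rw [inn]
  refine (Finset.sum_subset Finset.subset_union_left ?_).symm
  intro x _ hx
  simp [Finsupp.notMem_support_iff.mp hx]

lemma S2_nil (φ ψ : QStr) : S2 φ ψ [] = inn φ ψ := by
  rw [inn_eq_sum_left, S2]; simp

lemma qconcat_single (φ : QStr) (w : List Bool) :
    qconcat φ (Finsupp.single w 1) = Finsupp.mapDomain (· ++ w) φ := by
  rw [qconcat, Finsupp.mapDomain]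
  refine Finsupp.sum_congr ?_
  intro x _
  rw [Finsupp.sum_single_index] <;> simp

lemma S2_eq_inn (φ ψ : QStr) (w : List Bool) :
    S2 φ ψ w = inn (qconcat φ (Finsupp.single w 1)) ψ := by
  rw [qconcat_single, inn_eq_sum_left]
  have hinj : Function.Injective (fun x : List Bool => x ++ w) := by
    intro a b h; exact List.append_cancel_right h
  rw [Finset.sum_subset (Finsupp.mapDomain_support (f := (· ++ w)) (s := φ))]
  · rw [Finset.sum_image (fun a _ b _ h => hinj h)]
    refine (Finset.sum_congr rfl fun x _ => ?_).symm
    rw [Finsupp.mapDomain_apply hinj]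
  · intro x _ hx
    simp [Finsupp.notMem_support_iff.mp hx]

lemma qconcat_apply (φ A : QStr) (z : List Bool) :
    qconcat φ A z = ∑ u ∈ φ.support, ∑ v ∈ A.support, if u ++ v = z then φ u * A v else 0 := by
  rw [qconcat, Finsupp.sum, Finsupp.finset_sum_apply]
  refine Finset.sum_congr rfl fun u _ => ?_
  rw [Finsupp.sum, Finsupp.finset_sum_apply]
  exact Finset.sum_congr rfl fun v _ => Finsupp.single_apply

lemma qconcat_support (φ A : QStr) :
    (qconcat φ A).support ⊆ (φ.support ×ˢ A.support).image (fun p => p.1 ++ p.2) := by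
  intro z hz
  by_contra hne
  apply Finsupp.mem_support_iff.mp hz
  rw [qconcat_apply]
  refine Finset.sum_eq_zero fun u hu => Finset.sum_eq_zero fun v hv => ?_
  rw [if_neg]
  intro h
  exact hne (Finset.mem_image.mpr ⟨(u, v), Finset.mem_product.mpr ⟨hu, hv⟩, h⟩)

lemma getD_replicate_false (d j : ℕ) : (List.replicate d false).getD j false = false := by
  rcases lt_or_ge j d with h | h
  · rw [List.getD_eq_getElem _ _ (by simpa using h)]; simp
  · rw [List.getD_eq_default _ _ (by simpa using h)]

lemma pad_append_replicate (m d : ℕ) (x : List Bool) :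
    pad m (x ++ List.replicate d false) = pad m x := by
  funext i
  simp only [pad]
  rcases lt_or_ge (i : ℕ) x.length with h | h
  · rw [List.getD_append _ _ _ _ h]
  · rw [List.getD_append_right _ _ _ _ h, getD_replicate_false, List.getD_eq_default _ _ h]

lemma eq_append_of_pad_eq {m : ℕ} {x y : List Bool} (hy : y.length ≤ m)
    (hxy : x.length ≤ y.length) (h : pad m x = pad m y) :
    y = x ++ List.replicate (y.length - x.length) false := by
  apply List.ext_getElem (by simp; omega)
  intro i hi hi'
  have him : i < m := lt_of_lt_of_le hi hy
  have hpad := congrFun h ⟨i, him⟩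
  simp only [pad] at hpad
  rcases lt_or_ge i x.length with hix | hix
  · rw [List.getElem_append_left (by omega)]
    rw [List.getD_eq_getElem _ _ hix, List.getD_eq_getElem _ _ hi] at hpad
    exact hpad.symm
  · rw [List.getElem_append_right (by omega)]
    rw [List.getD_eq_default _ _ hix, List.getD_eq_getElem _ _ hi] at hpad
    simp [← hpad]

lemma split_pad {m : ℕ} {x y : List Bool} (hx : x.length ≤ m) (hy : y.length ≤ m) (a : ℂ) :
    (if pad m x = pad m y then a else 0) =
      ((if x = y then a else 0)
        + (∑ d ∈ Finset.Icc 1 m, if y = x ++ List.replicate d false then a else 0))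
        + (∑ d ∈ Finset.Icc 1 m, if x = y ++ List.replicate d false then a else 0) := by
  by_cases h : pad m x = pad m y
  · rw [if_pos h]
    rcases lt_trichotomy x.length y.length with hl | hl | hl
    · have hd : y = x ++ List.replicate (y.length - x.length) false :=
        eq_append_of_pad_eq hy (le_of_lt hl) h
      rw [if_neg (by rintro rfl; omega), Finset.sum_eq_single_of_mem (y.length - x.length)
        (by rw [Finset.mem_Icc]; omega), if_pos hd, Finset.sum_eq_zero, add_zero, zero_add]
      · intro d hd'
        rw [if_neg]
        intro hcon
        have := congrArg List.length hcon
        rw [Finset.mem_Icc] at hd'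
        simp at this; omega
      · intro d hd' hne
        rw [if_neg]
        intro hcon
        apply hne
        have := congrArg List.length hcon
        simp at this; omega
    · have hd : y = x ++ List.replicate (y.length - x.length) false :=
        eq_append_of_pad_eq hy (le_of_eq hl) h
      have hxy : x = y := by simpa [hl] using hd.symm
      rw [if_pos hxy, Finset.sum_eq_zero, Finset.sum_eq_zero, add_zero, add_zero]
      · intro d hd'
        rw [if_neg]
        intro hcon
        have := congrArg List.length hcon
        rw [Finset.mem_Icc] at hd'
        simp at this; omega
      · intro d hd'
        rw [if_neg]
        intro hcon
        have := congrArg List.length hcon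
        rw [Finset.mem_Icc] at hd'
        simp at this; omega
    · have hd : x = y ++ List.replicate (x.length - y.length) false :=
        eq_append_of_pad_eq hx (le_of_lt hl) h.symm
      have hB : (∑ d ∈ Finset.Icc 1 m, if y = x ++ List.replicate d false then a else 0) = 0 := by
        refine Finset.sum_eq_zero fun d hd' => ?_
        rw [if_neg]
        intro hcon
        have := congrArg List.length hcon
        rw [Finset.mem_Icc] at hd'
        simp at this; omega
      have hC : (∑ d ∈ Finset.Icc 1 m, if x = y ++ List.replicate d false then a else 0) = a := by
        rw [Finset.sum_eq_single_of_mem (x.length - y.length)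
          (by rw [Finset.mem_Icc]; omega), if_pos hd]
        intro d hd' hne
        rw [if_neg]
        intro hcon
        apply hne
        have := congrArg List.length hcon
        simp at this; omega
      rw [hB, hC, if_neg (by rintro rfl; omega), zero_add, zero_add]
  · rw [if_neg h, if_neg (by rintro rfl; exact h rfl), Finset.sum_eq_zero, Finset.sum_eq_zero,
      add_zero, add_zero]
    · intro d _
      rw [if_neg]
      rintro rfl
      exact h (pad_append_replicate m d y)
    · intro d _
      rw [if_neg]
      rintro rfl
      exact h (pad_append_replicate m d x).symm

lemma zef_apply (m : ℕ) (χ : QStr) (s : Fin m → Bool) :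
    zef m χ s = ∑ x ∈ χ.support, if pad m x = s then χ x else 0 := rfl

lemma inner_zef (m : ℕ) (φ ψ : QStr) (hφ : ∀ x ∈ φ.support, x.length ≤ m)
    (hψ : ∀ x ∈ ψ.support, x.length ≤ m) :
    (inner ℂ (zef m φ) (zef m ψ) : ℂ) =
      (S2 φ ψ [] + ∑ d ∈ Finset.Icc 1 m, S2 φ ψ (List.replicate d false))
        + (starRingEnd ℂ) (∑ d ∈ Finset.Icc 1 m, S2 ψ φ (List.replicate d false)) := by
  have step1 : (inner ℂ (zef m φ) (zef m ψ) : ℂ) =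
      ∑ x ∈ φ.support, ∑ y ∈ ψ.support,
        if pad m x = pad m y then (starRingEnd ℂ) (φ x) * ψ y else 0 := by
    rw [PiLp.inner_apply]
    simp only [RCLike.inner_apply', zef_apply]
    have e1 : ∀ s : Fin m → Bool,
        (starRingEnd ℂ) (∑ x ∈ φ.support, if pad m x = s then φ x else 0)
          * (∑ y ∈ ψ.support, if pad m y = s then ψ y else 0)
        = ∑ x ∈ φ.support, ∑ y ∈ ψ.support,
            (if pad m x = s then (starRingEnd ℂ) (φ x) else 0)
              * (if pad m y = s then ψ y else 0) := by
      intro s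
      rw [map_sum, Finset.sum_mul_sum]
      refine Finset.sum_congr rfl fun x _ => Finset.sum_congr rfl fun y _ => ?_
      rw [apply_ite (starRingEnd ℂ), map_zero]
    simp only [e1]
    rw [Finset.sum_comm]
    refine Finset.sum_congr rfl fun x _ => ?_
    rw [Finset.sum_comm]
    refine Finset.sum_congr rfl fun y _ => ?_
    rw [Finset.sum_eq_single_of_mem (pad m x) (Finset.mem_univ _)]
    · by_cases hxy : pad m x = pad m y
      · simp [hxy]
      · rw [if_neg hxy, if_pos rfl, if_neg (fun hc => hxy hc.symm), mul_zero]
    · intro s _ hs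
      rw [if_neg (fun h => hs h.symm), zero_mul]
  rw [step1]
  have step2 : ∀ x ∈ φ.support, ∀ y ∈ ψ.support,
      (if pad m x = pad m y then (starRingEnd ℂ) (φ x) * ψ y else 0) =
      ((if x = y then (starRingEnd ℂ) (φ x) * ψ y else 0)
        + (∑ d ∈ Finset.Icc 1 m, if y = x ++ List.replicate d false
            then (starRingEnd ℂ) (φ x) * ψ y else 0))
        + (∑ d ∈ Finset.Icc 1 m, if x = y ++ List.replicate d false
            then (starRingEnd ℂ) (φ x) * ψ y else 0) :=
    fun x hx y hy => split_pad (hφ x hx) (hψ y hy) _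
  rw [Finset.sum_congr rfl fun x hx => Finset.sum_congr rfl fun y hy => step2 x hx y hy]
  simp only [Finset.sum_add_distrib]
  congr 1
  · congr 1
    · -- diagonal term
      rw [S2]
      refine Finset.sum_congr rfl fun x hx => ?_
      rw [Finset.sum_ite_eq ψ.support x (fun y => (starRingEnd ℂ) (φ x) * ψ y)]
      by_cases hy : x ∈ ψ.support
      · simp [hy]
      · simp [hy, Finsupp.notMem_support_iff.mp hy]
    · -- T1
      calc ∑ x ∈ φ.support, ∑ y ∈ ψ.support, ∑ d ∈ Finset.Icc 1 m,
            (if y = x ++ List.replicate d false then (starRingEnd ℂ) (φ x) * ψ y else 0)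
          = ∑ x ∈ φ.support, ∑ d ∈ Finset.Icc 1 m, ∑ y ∈ ψ.support,
            (if y = x ++ List.replicate d false then (starRingEnd ℂ) (φ x) * ψ y else 0) :=
            Finset.sum_congr rfl fun x _ => Finset.sum_comm
        _ = ∑ d ∈ Finset.Icc 1 m, ∑ x ∈ φ.support, ∑ y ∈ ψ.support,
            (if y = x ++ List.replicate d false then (starRingEnd ℂ) (φ x) * ψ y else 0) :=
            Finset.sum_comm
        _ = ∑ d ∈ Finset.Icc 1 m, S2 φ ψ (List.replicate d false) := by
            refine Finset.sum_congr rfl fun d _ => ?_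
            rw [S2]
            refine Finset.sum_congr rfl fun x hx => ?_
            rw [Finset.sum_ite_eq' ψ.support (x ++ List.replicate d false)
              (fun y => (starRingEnd ℂ) (φ x) * ψ y)]
            by_cases hy : x ++ List.replicate d false ∈ ψ.support
            · simp [hy]
            · simp [hy, Finsupp.notMem_support_iff.mp hy]
  · -- T2
    calc ∑ x ∈ φ.support, ∑ y ∈ ψ.support, ∑ d ∈ Finset.Icc 1 m,
          (if x = y ++ List.replicate d false then (starRingEnd ℂ) (φ x) * ψ y else 0)
        = ∑ y ∈ ψ.support, ∑ x ∈ φ.support, ∑ d ∈ Finset.Icc 1 m,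
          (if x = y ++ List.replicate d false then (starRingEnd ℂ) (φ x) * ψ y else 0) :=
          Finset.sum_comm
      _ = ∑ y ∈ ψ.support, ∑ d ∈ Finset.Icc 1 m, ∑ x ∈ φ.support,
          (if x = y ++ List.replicate d false then (starRingEnd ℂ) (φ x) * ψ y else 0) :=
          Finset.sum_congr rfl fun y _ => Finset.sum_comm
      _ = ∑ d ∈ Finset.Icc 1 m, ∑ y ∈ ψ.support, ∑ x ∈ φ.support,
          (if x = y ++ List.replicate d false then (starRingEnd ℂ) (φ x) * ψ y else 0) :=
          Finset.sum_comm
      _ = (starRingEnd ℂ) (∑ d ∈ Finset.Icc 1 m, S2 ψ φ (List.replicate d false)) := by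
          rw [map_sum]
          refine Finset.sum_congr rfl fun d _ => ?_
          rw [S2, map_sum]
          refine Finset.sum_congr rfl fun y hy => ?_
          rw [map_mul, Complex.conj_conj]
          rw [Finset.sum_ite_eq' φ.support (y ++ List.replicate d false)
            (fun x => (starRingEnd ℂ) (φ x) * ψ y)]
          by_cases hx : y ++ List.replicate d false ∈ φ.support
          · rw [if_pos hx, mul_comm]
          · rw [if_neg hx, Finsupp.notMem_support_iff.mp hx, map_zero, mul_zero]

/-- Factoring a 5-fold sum. -/
lemma sum5_factor {α β : Type*} [DecidableEq α] (s1 s2 s3 s4 : Finset β) (T : Finset α)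
    (f : β → β → α → ℂ) (g : β → β → α → ℂ) :
    (∑ u ∈ s1, ∑ v ∈ s2, ∑ u' ∈ s3, ∑ v' ∈ s4, ∑ t ∈ T, f u u' t * g v v' t)
      = ∑ t ∈ T, (∑ u ∈ s1, ∑ u' ∈ s3, f u u' t) * (∑ v ∈ s2, ∑ v' ∈ s4, g v v' t) := by
  have inner_factor : ∀ t,
      (∑ u ∈ s1, ∑ u' ∈ s3, f u u' t) * (∑ v ∈ s2, ∑ v' ∈ s4, g v v' t)
        = ∑ u ∈ s1, ∑ u' ∈ s3, ∑ v ∈ s2, ∑ v' ∈ s4, f u u' t * g v v' t := by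
    intro t
    rw [Finset.sum_mul]
    refine Finset.sum_congr rfl fun u _ => ?_
    rw [Finset.sum_mul]
    refine Finset.sum_congr rfl fun u' _ => ?_
    rw [Finset.mul_sum]
    refine Finset.sum_congr rfl fun v _ => ?_
    rw [Finset.mul_sum]
  calc (∑ u ∈ s1, ∑ v ∈ s2, ∑ u' ∈ s3, ∑ v' ∈ s4, ∑ t ∈ T, f u u' t * g v v' t)
      = ∑ u ∈ s1, ∑ v ∈ s2, ∑ u' ∈ s3, ∑ t ∈ T, ∑ v' ∈ s4, f u u' t * g v v' t :=
        Finset.sum_congr rfl fun u _ => Finset.sum_congr rfl fun v _ =>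
          Finset.sum_congr rfl fun u' _ => Finset.sum_comm
    _ = ∑ u ∈ s1, ∑ v ∈ s2, ∑ t ∈ T, ∑ u' ∈ s3, ∑ v' ∈ s4, f u u' t * g v v' t :=
        Finset.sum_congr rfl fun u _ => Finset.sum_congr rfl fun v _ => Finset.sum_comm
    _ = ∑ u ∈ s1, ∑ t ∈ T, ∑ v ∈ s2, ∑ u' ∈ s3, ∑ v' ∈ s4, f u u' t * g v v' t :=
        Finset.sum_congr rfl fun u _ => Finset.sum_comm
    _ = ∑ t ∈ T, ∑ u ∈ s1, ∑ v ∈ s2, ∑ u' ∈ s3, ∑ v' ∈ s4, f u u' t * g v v' t :=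
        Finset.sum_comm
    _ = ∑ t ∈ T, ∑ u ∈ s1, ∑ u' ∈ s3, ∑ v ∈ s2, ∑ v' ∈ s4, f u u' t * g v v' t :=
        Finset.sum_congr rfl fun t _ => Finset.sum_congr rfl fun u _ => Finset.sum_comm
    _ = ∑ t ∈ T, (∑ u ∈ s1, ∑ u' ∈ s3, f u u' t) * (∑ v ∈ s2, ∑ v' ∈ s4, g v v' t) :=
        Finset.sum_congr rfl fun t _ => (inner_factor t).symm

lemma S2_qconcat (φ ψ A B : QStr) (c : ℂ)
    (h1 : ∀ w, S2 φ ψ w = if w = [] then c else 0)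
    (h2 : ∀ w, w ≠ [] → S2 ψ φ w = 0) (w : List Bool) :
    S2 (qconcat φ A) (qconcat ψ B) w = c * S2 A B w := by
  set T₁ : Finset (List Bool) :=
    insert [] (ψ.support.biUnion fun y => y.tails.toFinset) with hT₁
  set T₂ : Finset (List Bool) := φ.support.biUnion fun y => y.tails.toFinset with hT₂
  -- pointwise split of the indicator
  have split_append : ∀ u ∈ φ.support, ∀ u' ∈ ψ.support, ∀ (v v' : List Bool) (a : ℂ),
      (if u' ++ v' = u ++ (v ++ w) then a else 0)
        = (∑ t ∈ T₁, if u' = u ++ t ∧ v ++ w = t ++ v' then a else 0)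
          + (∑ t ∈ T₂, if t ≠ [] ∧ u = u' ++ t ∧ v' = t ++ (v ++ w) then a else 0) := by
    intro u hu u' hu' v v' a
    by_cases h : u' ++ v' = u ++ (v ++ w)
    · rcases le_or_gt u.length u'.length with hl | hl
      · obtain ⟨t₀, ht₀⟩ : u <+: u' :=
          List.prefix_of_prefix_length_le ⟨v ++ w, h.symm⟩ ⟨v', rfl⟩ hl
        have hvw : v ++ w = t₀ ++ v' := by
          apply List.append_cancel_left (as := u)
          rw [h.symm, ← ht₀, List.append_assoc]
        have hmem : t₀ ∈ T₁ := by
          apply Finset.mem_insert_of_mem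
          exact Finset.mem_biUnion.mpr ⟨u', hu', List.mem_toFinset.mpr
            ((List.mem_tails _ _).mpr ⟨u, ht₀⟩)⟩
        rw [if_pos h, Finset.sum_eq_single_of_mem t₀ hmem, if_pos ⟨ht₀.symm, hvw⟩,
          Finset.sum_eq_zero, add_zero]
        · intro t _
          rw [if_neg]
          rintro ⟨htne, hut, -⟩
          have hlen := congrArg List.length hut
          simp only [List.length_append] at hlen
          have h2 : 0 < t.length := List.length_pos_iff.mpr htne
          omega
        · intro t _ htne
          rw [if_neg]
          rintro ⟨hut, -⟩
          apply htne
          apply List.append_cancel_left (as := u)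
          rw [← hut, ht₀]
      · obtain ⟨t₀, ht₀⟩ : u' <+: u :=
          List.prefix_of_prefix_length_le ⟨v', rfl⟩ ⟨v ++ w, h.symm⟩ (le_of_lt hl)
        have ht₀ne : t₀ ≠ [] := by
          rintro rfl
          rw [List.append_nil] at ht₀
          rw [ht₀] at hl
          exact lt_irrefl _ hl
        have hv' : v' = t₀ ++ (v ++ w) := by
          apply List.append_cancel_left (as := u')
          rw [h, ← ht₀, List.append_assoc]
        have hmem : t₀ ∈ T₂ :=
          Finset.mem_biUnion.mpr ⟨u, hu, List.mem_toFinset.mpr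
            ((List.mem_tails _ _).mpr ⟨u', ht₀⟩)⟩
        rw [if_pos h, Finset.sum_eq_single_of_mem t₀ hmem, if_pos ⟨ht₀ne, ht₀.symm, hv'⟩,
          Finset.sum_eq_zero, zero_add]
        · intro t _
          rw [if_neg]
          rintro ⟨hut, -⟩
          have hlen := congrArg List.length hut
          simp only [List.length_append] at hlen
          omega
        · intro t _ htne
          rw [if_neg]
          rintro ⟨-, hut, -⟩
          apply htne
          apply List.append_cancel_left (as := u')
          rw [← hut, ht₀]
    · rw [if_neg h, Finset.sum_eq_zero, Finset.sum_eq_zero, add_zero]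
      · intro t _
        rw [if_neg]
        rintro ⟨-, rfl, rfl⟩
        exact h (by rw [List.append_assoc])
      · intro t _
        rw [if_neg]
        rintro ⟨rfl, hvw⟩
        exact h (by rw [List.append_assoc, ← hvw])
  -- main computation
  have hZ := qconcat_support φ A
  rw [← sum_eq_S2 (qconcat φ A) (qconcat ψ B) w hZ]
  have expand : ∀ z ∈ (φ.support ×ˢ A.support).image (fun p => p.1 ++ p.2),
      (starRingEnd ℂ) (qconcat φ A z) * (qconcat ψ B) (z ++ w)
        = ∑ u ∈ φ.support, ∑ v ∈ A.support,
            if u ++ v = z then (starRingEnd ℂ) (φ u * A v) * (qconcat ψ B) (z ++ w) else 0 := by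
    intro z _
    rw [qconcat_apply, map_sum, Finset.sum_mul]
    refine Finset.sum_congr rfl fun u _ => ?_
    rw [map_sum, Finset.sum_mul]
    refine Finset.sum_congr rfl fun v _ => ?_
    rw [apply_ite (starRingEnd ℂ), map_zero, ite_mul, zero_mul]
  rw [Finset.sum_congr rfl expand]
  rw [Finset.sum_comm]
  have collapse1 : ∀ u ∈ φ.support,
      (∑ z ∈ (φ.support ×ˢ A.support).image (fun p => p.1 ++ p.2), ∑ v ∈ A.support,
        if u ++ v = z then (starRingEnd ℂ) (φ u * A v) * (qconcat ψ B) (z ++ w) else 0)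
      = ∑ v ∈ A.support,
          (starRingEnd ℂ) (φ u * A v) * (qconcat ψ B) (u ++ v ++ w) := by
    intro u hu
    rw [Finset.sum_comm]
    refine Finset.sum_congr rfl fun v hv => ?_
    have hmem : u ++ v ∈ (φ.support ×ˢ A.support).image (fun p => p.1 ++ p.2) :=
      Finset.mem_image.mpr ⟨(u, v), Finset.mem_product.mpr ⟨hu, hv⟩, rfl⟩
    rw [Finset.sum_ite_eq _ (u ++ v)
      (fun z => (starRingEnd ℂ) (φ u * A v) * (qconcat ψ B) (z ++ w)), if_pos hmem]
  rw [Finset.sum_congr rfl collapse1]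
  -- expand the second factor
  have expand2 : ∀ u ∈ φ.support, ∀ v ∈ A.support,
      (starRingEnd ℂ) (φ u * A v) * (qconcat ψ B) (u ++ v ++ w)
        = ∑ u' ∈ ψ.support, ∑ v' ∈ B.support,
            if u' ++ v' = u ++ (v ++ w)
              then (starRingEnd ℂ) (φ u) * ψ u' * ((starRingEnd ℂ) (A v) * B v') else 0 := by
    intro u _ v _
    rw [qconcat_apply, Finset.mul_sum]
    refine Finset.sum_congr rfl fun u' _ => ?_
    rw [Finset.mul_sum]
    refine Finset.sum_congr rfl fun v' _ => ?_
    rw [mul_ite, mul_zero, List.append_assoc, map_mul]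
    congr 1
    ring
  rw [Finset.sum_congr rfl fun u hu => Finset.sum_congr rfl (expand2 u hu)]
  -- split indicators pointwise
  have splitall : ∀ u ∈ φ.support, ∀ v ∈ A.support, ∀ u' ∈ ψ.support, ∀ v' ∈ B.support,
      (if u' ++ v' = u ++ (v ++ w)
          then (starRingEnd ℂ) (φ u) * ψ u' * ((starRingEnd ℂ) (A v) * B v') else 0)
        = (∑ t ∈ T₁, (if u' = u ++ t then (starRingEnd ℂ) (φ u) * ψ u' else 0)
              * (if v ++ w = t ++ v' then (starRingEnd ℂ) (A v) * B v' else 0))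
          + (∑ t ∈ T₂, (if t ≠ [] ∧ u = u' ++ t then (starRingEnd ℂ) (φ u) * ψ u' else 0)
              * (if v' = t ++ (v ++ w) then (starRingEnd ℂ) (A v) * B v' else 0)) := by
    intro u hu v _ u' hu' v' _
    rw [split_append u hu u' hu' v v']
    congr 1
    · refine Finset.sum_congr rfl fun t _ => ?_
      by_cases h1 : u' = u ++ t <;> by_cases h2 : v ++ w = t ++ v' <;>
        simp [h1, h2]
    · refine Finset.sum_congr rfl fun t _ => ?_
      by_cases h0 : t = ([] : List Bool) <;> by_cases h1 : u = u' ++ t <;>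
        by_cases h2 : v' = t ++ (v ++ w) <;> simp [h0, h1, h2]
  rw [Finset.sum_congr rfl fun u hu => Finset.sum_congr rfl fun v hv =>
    Finset.sum_congr rfl fun u' hu' => Finset.sum_congr rfl fun v' hv' =>
      splitall u hu v hv u' hu' v' hv']
  simp only [Finset.sum_add_distrib]
  rw [sum5_factor φ.support A.support ψ.support B.support T₁
    (fun u u' t => if u' = u ++ t then (starRingEnd ℂ) (φ u) * ψ u' else 0)
    (fun v v' t => if v ++ w = t ++ v' then (starRingEnd ℂ) (A v) * B v' else 0)]
  rw [sum5_factor φ.support A.support ψ.support B.support T₂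
    (fun u u' t => if t ≠ [] ∧ u = u' ++ t then (starRingEnd ℂ) (φ u) * ψ u' else 0)
    (fun v v' t => if v' = t ++ (v ++ w) then (starRingEnd ℂ) (A v) * B v' else 0)]
  -- the first factor in part 1 is S2 φ ψ t
  have fact1 : ∀ t : List Bool,
      (∑ u ∈ φ.support, ∑ u' ∈ ψ.support,
        if u' = u ++ t then (starRingEnd ℂ) (φ u) * ψ u' else 0) = S2 φ ψ t := by
    intro t
    rw [S2]
    refine Finset.sum_congr rfl fun u _ => ?_
    rw [Finset.sum_ite_eq' ψ.support (u ++ t) (fun u' => (starRingEnd ℂ) (φ u) * ψ u')]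
    by_cases hmem : u ++ t ∈ ψ.support
    · rw [if_pos hmem]
    · rw [if_neg hmem, Finsupp.notMem_support_iff.mp hmem, mul_zero]
  have fact2 : ∀ t : List Bool, t ≠ [] →
      (∑ u ∈ φ.support, ∑ u' ∈ ψ.support,
        if t ≠ [] ∧ u = u' ++ t then (starRingEnd ℂ) (φ u) * ψ u' else 0) = 0 := by
    intro t ht
    rw [Finset.sum_comm]
    have : ∀ u' ∈ ψ.support,
        (∑ u ∈ φ.support, if t ≠ [] ∧ u = u' ++ t
          then (starRingEnd ℂ) (φ u) * ψ u' else 0)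
        = (starRingEnd ℂ) (φ (u' ++ t)) * ψ u' := by
      intro u' _
      simp only [ht, ne_eq, not_false_eq_true, true_and]
      rw [Finset.sum_ite_eq' φ.support (u' ++ t) (fun u => (starRingEnd ℂ) (φ u) * ψ u')]
      by_cases hmem : u' ++ t ∈ φ.support
      · rw [if_pos hmem]
      · rw [if_neg hmem, Finsupp.notMem_support_iff.mp hmem, map_zero, zero_mul]
    rw [Finset.sum_congr rfl this]
    have := h2 t ht
    rw [S2] at this
    calc ∑ u' ∈ ψ.support, (starRingEnd ℂ) (φ (u' ++ t)) * ψ u'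
        = (starRingEnd ℂ) (∑ u' ∈ ψ.support, (starRingEnd ℂ) (ψ u') * φ (u' ++ t)) := by
          rw [map_sum]
          refine Finset.sum_congr rfl fun u' _ => ?_
          rw [map_mul, Complex.conj_conj, mul_comm]
      _ = 0 := by rw [this, map_zero]
  -- part 2 vanishes
  have part2 : (∑ t ∈ T₂,
      (∑ u ∈ φ.support, ∑ u' ∈ ψ.support,
        if t ≠ [] ∧ u = u' ++ t then (starRingEnd ℂ) (φ u) * ψ u' else 0)
      * (∑ v ∈ A.support, ∑ v' ∈ B.support,
        if v' = t ++ (v ++ w) then (starRingEnd ℂ) (A v) * B v' else 0)) = 0 := by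
    refine Finset.sum_eq_zero fun t _ => ?_
    by_cases ht : t = ([] : List Bool)
    · subst ht
      rw [Finset.sum_eq_zero, zero_mul]
      intro u _
      exact Finset.sum_eq_zero fun u' _ => by simp
    · rw [fact2 t ht, zero_mul]
  rw [part2, add_zero]
  -- part 1
  have part1 : ∀ t ∈ T₁, S2 φ ψ t
      * (∑ v ∈ A.support, ∑ v' ∈ B.support,
          if v ++ w = t ++ v' then (starRingEnd ℂ) (A v) * B v' else 0)
      = if [] = t then c * S2 A B w else 0 := by
    intro t _
    rw [h1 t]
    by_cases ht : t = ([] : List Bool)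
    · subst ht
      rw [if_pos rfl, if_pos rfl]
      congr 1
      rw [S2]
      refine Finset.sum_congr rfl fun v _ => ?_
      simp only [List.nil_append]
      rw [Finset.sum_ite_eq B.support (v ++ w) (fun v' => (starRingEnd ℂ) (A v) * B v')]
      by_cases hmem : v ++ w ∈ B.support
      · rw [if_pos hmem]
      · rw [if_neg hmem, Finsupp.notMem_support_iff.mp hmem, mul_zero]
    · rw [if_neg ht, if_neg (fun h => ht h.symm), zero_mul]
  calc (∑ t ∈ T₁, (∑ u ∈ φ.support, ∑ u' ∈ ψ.support,
          if u' = u ++ t then (starRingEnd ℂ) (φ u) * ψ u' else 0)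
        * (∑ v ∈ A.support, ∑ v' ∈ B.support,
          if v ++ w = t ++ v' then (starRingEnd ℂ) (A v) * B v' else 0))
      = ∑ t ∈ T₁, if [] = t then c * S2 A B w else 0 := by
        refine Finset.sum_congr rfl fun t ht => ?_
        rw [fact1 t]
        exact part1 t ht
    _ = c * S2 A B w := by
        rw [Finset.sum_ite_eq T₁ ([] : List Bool) (fun _ => c * S2 A B w),
          if_pos (Finset.mem_insert_self _ _)]

lemma embedIdx_eq (n lmax : ℕ) (j : Fin n) (i : Fin lmax) :
    embedIdx n lmax j i = finProdFinEquiv (j, i) := by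
  apply Fin.ext
  simp [embedIdx, finProdFinEquiv_apply_val]
  ring

def blockEquiv (n lmax : ℕ) : (Fin n → Fin lmax → Bool) ≃ (Fin (n * lmax) → Bool) :=
  (Equiv.curry (Fin n) (Fin lmax) Bool).symm.trans
    ((finProdFinEquiv (m := n) (n := lmax)).arrowCongr (Equiv.refl Bool))

lemma blockEquiv_apply (n lmax : ℕ) (t : Fin n → Fin lmax → Bool) (j : Fin n) (i : Fin lmax) :
    blockEquiv n lmax t (embedIdx n lmax j i) = t j i := by
  rw [embedIdx_eq]
  simp [blockEquiv, Equiv.arrowCongr, Equiv.curry]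

lemma tensorZef_apply (n lmax : ℕ) (f : Fin n → QStr) (s : Fin (n * lmax) → Bool) :
    tensorZef n lmax f s = ∏ j : Fin n, zef lmax (f j) (fun i => s (embedIdx n lmax j i)) := rfl

lemma inner_tensorZef (n lmax : ℕ) (f f' : Fin n → QStr) :
    (inner ℂ (tensorZef n lmax f) (tensorZef n lmax f') : ℂ)
      = ∏ j : Fin n, (inner ℂ (zef lmax (f j)) (zef lmax (f' j)) : ℂ) := by
  rw [PiLp.inner_apply]
  simp only [RCLike.inner_apply', tensorZef_apply]
  have step1 : ∀ s : Fin (n * lmax) → Bool,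
      (starRingEnd ℂ) (∏ j : Fin n, zef lmax (f j) (fun i => s (embedIdx n lmax j i)))
          * (∏ j : Fin n, zef lmax (f' j) (fun i => s (embedIdx n lmax j i)))
        = ∏ j : Fin n, ((starRingEnd ℂ) (zef lmax (f j) (fun i => s (embedIdx n lmax j i)))
            * zef lmax (f' j) (fun i => s (embedIdx n lmax j i))) := by
    intro s
    rw [map_prod, Finset.prod_mul_distrib]
  simp only [step1]
  have step2 : ∑ s : Fin (n * lmax) → Bool,
      ∏ j : Fin n, ((starRingEnd ℂ) (zef lmax (f j) (fun i => s (embedIdx n lmax j i)))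
          * zef lmax (f' j) (fun i => s (embedIdx n lmax j i)))
      = ∑ t : Fin n → Fin lmax → Bool,
        ∏ j : Fin n, ((starRingEnd ℂ) (zef lmax (f j) (t j)) * zef lmax (f' j) (t j)) := by
    refine (Fintype.sum_equiv (blockEquiv n lmax) _ _ fun t => ?_).symm
    refine Finset.prod_congr rfl fun j _ => ?_
    have : (fun i => blockEquiv n lmax t (embedIdx n lmax j i)) = t j := by
      funext i; exact blockEquiv_apply n lmax t j i
    rw [this]
  rw [step2]
  rw [← Fintype.prod_sum (fun j (u : Fin lmax → Bool) =>
    (starRingEnd ℂ) (zef lmax (f j) u) * zef lmax (f' j) u)]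
  refine Finset.prod_congr rfl fun j _ => ?_
  rw [PiLp.inner_apply]
  simp only [RCLike.inner_apply']

lemma exists_unitary {ι : Type*} [Fintype ι] {E : Type*} [NormedAddCommGroup E]
    [InnerProductSpace ℂ E] [FiniteDimensional ℂ E]
    (vA vB : ι → E) (hA : Orthonormal ℂ vA) (hB : Orthonormal ℂ vB) :
    ∃ U : E ≃ₗᵢ[ℂ] E, ∀ i, U (vA i) = vB i := by
  classical
  let bA := OrthonormalBasis.span hA Finset.univ
  let bB := OrthonormalBasis.span hB Finset.univ
  let V := bA.repr.trans bB.repr.symm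
  let L : (Submodule.span ℂ (Finset.univ.image vA : Set E)) →ₗᵢ[ℂ] E :=
    (Submodule.span ℂ (Finset.univ.image vB : Set E)).subtypeₗᵢ.comp V.toLinearIsometry
  let U0 : E →ₗᵢ[ℂ] E := L.extend
  have hsurj : Function.Surjective U0 := by
    have hinj : Function.Injective U0.toLinearMap := U0.injective
    exact (LinearMap.injective_iff_surjective).mp hinj
  refine ⟨LinearIsometryEquiv.ofSurjective U0 hsurj, fun i => ?_⟩
  have hmem : vA i ∈ Submodule.span ℂ (Finset.univ.image vA : Set E) :=
    Submodule.subset_span (by simp)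
  have hcoe : (LinearIsometryEquiv.ofSurjective U0 hsurj) (vA i) = U0 (vA i) := by
    rw [LinearIsometryEquiv.coe_ofSurjective]
  rw [hcoe]
  have h1 : U0 (vA i) = L ⟨vA i, hmem⟩ := LinearIsometry.extend_apply L ⟨vA i, hmem⟩
  have hbA : (⟨vA i, hmem⟩ : Submodule.span ℂ (Finset.univ.image vA : Set E))
      = bA ⟨i, Finset.mem_univ i⟩ := by
    apply Subtype.ext
    exact (OrthonormalBasis.span_apply hA Finset.univ ⟨i, Finset.mem_univ i⟩).symm
  have hV : V (bA ⟨i, Finset.mem_univ i⟩) = bB ⟨i, Finset.mem_univ i⟩ := by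
    show bB.repr.symm (bA.repr (bA ⟨i, Finset.mem_univ i⟩)) = _
    rw [OrthonormalBasis.repr_self, OrthonormalBasis.repr_symm_single]
  rw [h1, hbA]
  show ((V (bA ⟨i, Finset.mem_univ i⟩) : Submodule.span ℂ (Finset.univ.image vB : Set E)) : E)
      = vB i
  rw [hV]
  exact OrthonormalBasis.span_apply hB Finset.univ ⟨i, Finset.mem_univ i⟩

lemma S2_single_single (w : List Bool) :
    S2 (Finsupp.single ([] : List Bool) (1 : ℂ)) (Finsupp.single ([] : List Bool) (1 : ℂ)) w
      = if w = [] then 1 else 0 := by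
  rw [S2, Finsupp.support_single_ne_zero _ one_ne_zero]
  simp [Finsupp.single_apply, eq_comm]

end Stmt19Aux

open Stmt19Aux

/-- prefix free Hilbert spaces are condensable: the zero-extended
concatenations form an orthonormal family, and a unitary maps each tensor of
zero-extended forms to the zero-extended form of the concatenation. -/
theorem stmt_19 (k lmax n : ℕ) (hn : 1 ≤ n) (ξ : Fin k → QStr)
    (hsupp : ∀ i, ∀ x ∈ (ξ i).support, x.length ≤ lmax)
    (horthonormal : ∀ i j, inn (ξ i) (ξ j) = if i = j then 1 else 0)
    (hpf : ∀ i j, ∀ χ : QStr, χ [] = 0 → inn (qconcat (ξ i) χ) (ξ j) = 0) :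
    Orthonormal ℂ
        (fun g : Fin n → Fin k => zef (n * lmax) (concatList (List.ofFn fun j => ξ (g j))))
      ∧ ∃ U : EuclideanSpace ℂ (Fin (n * lmax) → Bool)
            ≃ₗᵢ[ℂ] EuclideanSpace ℂ (Fin (n * lmax) → Bool),
          ∀ g : Fin n → Fin k,
            U (tensorZef n lmax fun j => ξ (g j))
              = zef (n * lmax) (concatList (List.ofFn fun j => ξ (g j))) := by
  classical
  -- abbreviation for the concatenated quantum strings
  set ξL : (Fin n → Fin k) → QStr :=
    (fun g : Fin n → Fin k => concatList (List.ofFn fun j => ξ (g j))) with hξL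
  have hofn : ∀ g : Fin n → Fin k, (List.ofFn fun j => ξ (g j)) = (List.ofFn g).map ξ := by
    intro g; rw [List.map_ofFn]; rfl
  -- basic facts about the family
  have hxiS2 : ∀ i j w, S2 (ξ i) (ξ j) w = if w = [] then (if i = j then 1 else 0) else 0 := by
    intro i j w
    by_cases hw : w = []
    · subst hw; rw [S2_nil]; simp [horthonormal i j]
    · rw [S2_eq_inn, hpf i j _ (by simp [Finsupp.single_apply, hw])]
      simp [hw]
  have hrepl : ∀ d ∈ Finset.Icc 1 (n * lmax), (List.replicate d false : List Bool) ≠ [] := by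
    intro d hd h
    have := congrArg List.length h
    rw [Finset.mem_Icc] at hd
    simp at this; omega
  have hrepl' : ∀ d ∈ Finset.Icc 1 lmax, (List.replicate d false : List Bool) ≠ [] := by
    intro d hd h
    have := congrArg List.length h
    rw [Finset.mem_Icc] at hd
    simp at this; omega
  -- the recursion for concatenations
  have hlist : ∀ (L M : List (Fin k)), L.length = M.length → ∀ w,
      S2 (concatList (L.map ξ)) (concatList (M.map ξ)) w
        = if L = M ∧ w = [] then 1 else 0 := by
    intro L
    induction L with
    | nil =>
      intro M hM w
      have : M = [] := List.length_eq_zero_iff.mp hM.symm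
      subst this
      simp only [List.map_nil]
      rw [show concatList [] = Finsupp.single ([] : List Bool) (1 : ℂ) from rfl,
        S2_single_single]
      simp
    | cons i L' ih =>
      intro M hM w
      cases M with
      | nil => simp at hM
      | cons j M' =>
        simp only [List.map_cons]
        have hrec := ih M' (by simpa using hM)
        rw [show concatList (ξ i :: L'.map ξ) = qconcat (ξ i) (concatList (L'.map ξ)) from rfl,
          show concatList (ξ j :: M'.map ξ) = qconcat (ξ j) (concatList (M'.map ξ)) from rfl]
        rw [S2_qconcat (ξ i) (ξ j) _ _ (if i = j then 1 else 0) (fun w' => hxiS2 i j w')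
          (fun w' hw' => by rw [hxiS2 j i w']; simp [hw', eq_comm]) w]
        rw [hrec w]
        by_cases hij : i = j <;> by_cases hLM : L' = M' <;> by_cases hw : w = [] <;>
          simp [hij, hLM, hw]
  -- support bounds
  have hsuppL : ∀ (L : List (Fin k)), ∀ x ∈ (concatList (L.map ξ)).support,
      x.length ≤ L.length * lmax := by
    intro L
    induction L with
    | nil =>
      intro x hx
      simp only [List.map_nil] at hx
      rw [show concatList [] = Finsupp.single ([] : List Bool) (1 : ℂ) from rfl] at hx
      have h2 : x ∈ ({[]} : Finset (List Bool)) := Finsupp.support_single_subset hx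
      rw [Finset.mem_singleton] at h2
      subst h2
      simp
    | cons i L' ih =>
      intro x hx
      simp only [List.map_cons] at hx
      have hx2 := qconcat_support (ξ i) (concatList (L'.map ξ)) hx
      obtain ⟨⟨u, v⟩, huv, rfl⟩ := Finset.mem_image.mp hx2
      rw [Finset.mem_product] at huv
      have h1 := hsupp i u huv.1
      have h2 := ih v huv.2
      have h3 : (L'.length + 1) * lmax = L'.length * lmax + lmax := by ring
      simp only [List.length_append, List.length_cons, h3]
      omega
  have hsuppξL : ∀ g : Fin n → Fin k, ∀ x ∈ (ξL g).support, x.length ≤ n * lmax := by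
    intro g x hx
    rw [hξL] at hx
    simp only [hofn g] at hx
    have := hsuppL (List.ofFn g) x hx
    simpa using this
  -- the concatenated zef family is orthonormal
  have horthoZ : Orthonormal ℂ (fun g : Fin n → Fin k => zef (n * lmax) (ξL g)) := by
    rw [orthonormal_iff_ite]
    intro g g'
    rw [inner_zef (n * lmax) _ _ (hsuppξL g) (hsuppξL g')]
    have hS : ∀ w, S2 (ξL g) (ξL g') w
        = if List.ofFn g = List.ofFn g' ∧ w = [] then 1 else 0 := by
      intro w
      rw [hξL]
      simp only [hofn g, hofn g']
      exact hlist (List.ofFn g) (List.ofFn g') (by simp) w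
    have hS' : ∀ w, S2 (ξL g') (ξL g) w
        = if List.ofFn g' = List.ofFn g ∧ w = [] then 1 else 0 := by
      intro w
      rw [hξL]
      simp only [hofn g, hofn g']
      exact hlist (List.ofFn g') (List.ofFn g) (by simp) w
    have hz1 : (∑ d ∈ Finset.Icc 1 (n * lmax),
        S2 (ξL g) (ξL g') (List.replicate d false)) = 0 :=
      Finset.sum_eq_zero fun d hd => by rw [hS]; simp [hrepl d hd]
    have hz2 : (∑ d ∈ Finset.Icc 1 (n * lmax),
        S2 (ξL g') (ξL g) (List.replicate d false)) = 0 :=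
      Finset.sum_eq_zero fun d hd => by rw [hS']; simp [hrepl d hd]
    rw [hz1, hz2, hS [], map_zero, add_zero, add_zero]
    have hiff : (List.ofFn g = List.ofFn g') ↔ g = g' := List.ofFn_inj
    simp [hiff]
  refine ⟨horthoZ, ?_⟩
  -- inner products of the single-block zefs
  have hinner1 : ∀ i j : Fin k,
      (inner ℂ (zef lmax (ξ i)) (zef lmax (ξ j)) : ℂ) = if i = j then 1 else 0 := by
    intro i j
    rw [inner_zef lmax _ _ (hsupp i) (hsupp j)]
    have hz1 : (∑ d ∈ Finset.Icc 1 lmax, S2 (ξ i) (ξ j) (List.replicate d false)) = 0 :=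
      Finset.sum_eq_zero fun d hd => by rw [hxiS2 i j]; simp [hrepl' d hd]
    have hz2 : (∑ d ∈ Finset.Icc 1 lmax, S2 (ξ j) (ξ i) (List.replicate d false)) = 0 :=
      Finset.sum_eq_zero fun d hd => by rw [hxiS2 j i]; simp [hrepl' d hd]
    rw [hz1, hz2, S2_nil, horthonormal i j, map_zero, add_zero, add_zero]
  -- the tensor family is orthonormal
  have horthoT : Orthonormal ℂ (fun g : Fin n → Fin k =>
      tensorZef n lmax fun j => ξ (g j)) := by
    rw [orthonormal_iff_ite]
    intro g g'
    rw [inner_tensorZef]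
    simp only [hinner1]
    by_cases hgg : g = g'
    · subst hgg; simp
    · obtain ⟨j0, hj0⟩ := Function.ne_iff.mp hgg
      rw [Finset.prod_eq_zero (Finset.mem_univ j0) (by simp [hj0]), if_neg hgg]
  obtain ⟨U, hU⟩ := exists_unitary (fun g : Fin n → Fin k =>
      tensorZef n lmax fun j => ξ (g j))
    (fun g : Fin n → Fin k => zef (n * lmax) (ξL g)) horthoT horthoZ
  exact ⟨U, hU⟩

end
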